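/- Convexity of the uncorrelated-input statistical strength: for any two behaviors P, P' in the same (r,s) Bell scenario and any μ ∈ [0,1], S_uc(μ·P + (1−μ)·P') ≤ μ·S_uc(P) + (1−μ)·S_uc(P'), where μ·P + (1−μ)·P' denotes the entrywise convex combination (itself a behavior). -/

import Mathlib

open scoped ENNReal
open Finset

/-- A probability distribution on a finite type. -/
def IsDist {Z : Type*} [Fintype Z] (p : Z → ℝ) : Prop :=
  (∀ z, 0 ≤ p z) ∧ ∑ z, p z = 1

/-- Relative entropy (Kullback-Leibler divergence) of finitely supported
distributions, valued in `[0,∞]`, with the conventions `0·log(0/t) = 0` and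
`S(p‖q) = ∞` whenever `q` vanishes at a point where `p` does not. -/
noncomputable def relEnt {Z : Type*} [Fintype Z] (p q : Z → ℝ) : ℝ≥0∞ :=
  if ∃ z, p z ≠ 0 ∧ q z = 0 then ⊤
  else ENNReal.ofReal (∑ z, p z * Real.log (p z / q z))

/-- A behavior in the (r,s) Bell scenario: `P a b x y = P(a,b|x,y)`. -/
def IsBehavior {r s : ℕ} (P : Fin r → Fin r → Fin s → Fin s → ℝ) : Prop :=
  (∀ a b x y, 0 ≤ P a b x y) ∧ ∀ x y, ∑ a, ∑ b, P a b x y = 1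

/-- The no-signaling conditions. -/
def NoSignaling {r s : ℕ} (P : Fin r → Fin r → Fin s → Fin s → ℝ) : Prop :=
  (∀ b x x' y, ∑ a, P a b x y = ∑ a, P a b x' y) ∧
  (∀ a x y y', ∑ b, P a b x y = ∑ b, P a b x y')

/-- Local (local-hidden-variable) behavior. -/
def IsLocal {r s : ℕ} (P : Fin r → Fin r → Fin s → Fin s → ℝ) : Prop :=
  ∃ (n : ℕ) (q : Fin n → ℝ) (PA : Fin r → Fin s → Fin n → ℝ)
    (PB : Fin r → Fin s → Fin n → ℝ),
    IsDist q ∧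
    (∀ x l, (∀ a, 0 ≤ PA a x l) ∧ ∑ a, PA a x l = 1) ∧
    (∀ y l, (∀ b, 0 ≤ PB b y l) ∧ ∑ b, PB b y l = 1) ∧
    (∀ a b x y, P a b x y = ∑ l, q l * PA a x l * PB b y l)

/-- Output distribution `P(·,·|x,y)` of a behavior for fixed inputs. -/
def outDist {r s : ℕ} (P : Fin r → Fin r → Fin s → Fin s → ℝ) (x y : Fin s) :
    Fin r × Fin r → ℝ := fun ab => P ab.1 ab.2 x y

/-- The behavior relative entropy `S_b(P‖P')`: the maximum over input pairs
`(x,y)` of the relative entropy of the output distributions. -/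
noncomputable def Sb {r s : ℕ} (P P' : Fin r → Fin r → Fin s → Fin s → ℝ) : ℝ≥0∞ :=
  Finset.univ.sup fun xy : Fin s × Fin s =>
    relEnt (outDist P xy.1 xy.2) (outDist P' xy.1 xy.2)

/-- A global wiring from the (r,s) scenario to the (rf,sf) scenario. -/
structure GlobalWiring (r s rf sf : ℕ) where
  I : Fin s → Fin s → Fin sf → Fin sf → ℝ          -- I x y χ ψ  =  I(x,y|χ,ψ)
  O : Fin rf → Fin rf → Fin r → Fin r → Fin s → Fin s → Fin sf → Fin sf → ℝ
    -- O α β a b x y χ ψ  =  O(α,β|a,b,x,y,χ,ψ)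
  I_nonneg : ∀ x y χ ψ, 0 ≤ I x y χ ψ
  I_sum : ∀ χ ψ, ∑ x, ∑ y, I x y χ ψ = 1
  O_nonneg : ∀ α β a b x y χ ψ, 0 ≤ O α β a b x y χ ψ
  O_sum : ∀ a b x y χ ψ, ∑ α, ∑ β, O α β a b x y χ ψ = 1

/-- Action of a global wiring on a behavior. -/
noncomputable def GlobalWiring.apply {r s rf sf : ℕ} (W : GlobalWiring r s rf sf)
    (P : Fin r → Fin r → Fin s → Fin s → ℝ) :
    Fin rf → Fin rf → Fin sf → Fin sf → ℝ :=
  fun α β χ ψ => ∑ a, ∑ b, ∑ x, ∑ y,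
    W.O α β a b x y χ ψ * P a b x y * W.I x y χ ψ

/-- LOSR wiring: a global wiring whose input and output boxes are local. -/
def GlobalWiring.IsLOSR {r s rf sf : ℕ} (W : GlobalWiring r s rf sf) : Prop :=
  ∃ (n m : ℕ) (q : Fin n → ℝ) (q' : Fin m → ℝ)
    (IA : Fin s → Fin sf → Fin n → ℝ) (IB : Fin s → Fin sf → Fin n → ℝ)
    (OA : Fin rf → Fin r → Fin s → Fin sf → Fin m → ℝ)
    (OB : Fin rf → Fin r → Fin s → Fin sf → Fin m → ℝ),
    IsDist q ∧ IsDist q' ∧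
    (∀ χ l, (∀ x, 0 ≤ IA x χ l) ∧ ∑ x, IA x χ l = 1) ∧
    (∀ ψ l, (∀ y, 0 ≤ IB y ψ l) ∧ ∑ y, IB y ψ l = 1) ∧
    (∀ a x χ u, (∀ α, 0 ≤ OA α a x χ u) ∧ ∑ α, OA α a x χ u = 1) ∧
    (∀ b y ψ u, (∀ β, 0 ≤ OB β b y ψ u) ∧ ∑ β, OB β b y ψ u = 1) ∧
    (∀ x y χ ψ, W.I x y χ ψ = ∑ l, q l * IA x χ l * IB y ψ l) ∧
    (∀ α β a b x y χ ψ,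
      W.O α β a b x y χ ψ = ∑ u, q' u * OA α a x χ u * OB β b y ψ u)

/-- UCLOSR wiring: a global wiring whose input and output boxes are products. -/
def GlobalWiring.IsUCLOSR {r s rf sf : ℕ} (W : GlobalWiring r s rf sf) : Prop :=
  ∃ (IA : Fin s → Fin sf → ℝ) (IB : Fin s → Fin sf → ℝ)
    (OA : Fin rf → Fin r → Fin s → Fin sf → ℝ)
    (OB : Fin rf → Fin r → Fin s → Fin sf → ℝ),
    (∀ χ, (∀ x, 0 ≤ IA x χ) ∧ ∑ x, IA x χ = 1) ∧
    (∀ ψ, (∀ y, 0 ≤ IB y ψ) ∧ ∑ y, IB y ψ = 1) ∧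
    (∀ a x χ, (∀ α, 0 ≤ OA α a x χ) ∧ ∑ α, OA α a x χ = 1) ∧
    (∀ b y ψ, (∀ β, 0 ≤ OB β b y ψ) ∧ ∑ β, OB β b y ψ = 1) ∧
    (∀ x y χ ψ, W.I x y χ ψ = IA x χ * IB y ψ) ∧
    (∀ α β a b x y χ ψ, W.O α β a b x y χ ψ = OA α a x χ * OB β b y ψ)

/-- The relative entropy of nonlocality `S_nl`. -/
noncomputable def Snl {r s : ℕ} (P : Fin r → Fin r → Fin s → Fin s → ℝ) : ℝ≥0∞ :=
  ⨅ (Q : Fin r → Fin r → Fin s → Fin s → ℝ) (_ : IsBehavior Q ∧ IsLocal Q), Sb P Q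

/-- The uniform-input statistical strength `S_u`. -/
noncomputable def Su {r s : ℕ} (P : Fin r → Fin r → Fin s → Fin s → ℝ) : ℝ≥0∞ :=
  ⨅ (Q : Fin r → Fin r → Fin s → Fin s → ℝ) (_ : IsBehavior Q ∧ IsLocal Q),
    ((s : ℝ≥0∞) ^ 2)⁻¹ * ∑ x, ∑ y, relEnt (outDist P x y) (outDist Q x y)

/-- The uncorrelated-input statistical strength `S_uc`. -/
noncomputable def Suc {r s : ℕ} (P : Fin r → Fin r → Fin s → Fin s → ℝ) : ℝ≥0∞ :=
  ⨆ (DA : Fin s → ℝ) (DB : Fin s → ℝ) (_ : IsDist DA ∧ IsDist DB),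
    ⨅ (Q : Fin r → Fin r → Fin s → Fin s → ℝ) (_ : IsBehavior Q ∧ IsLocal Q),
      ∑ x, ∑ y, ENNReal.ofReal (DA x * DB y) *
        relEnt (outDist P x y) (outDist Q x y)

lemma logSum2 (a b c d : ℝ) (ha : 0 ≤ a) (hb : 0 ≤ b) (hc : 0 ≤ c) (hd : 0 ≤ d)
    (hac : a ≠ 0 → c ≠ 0) (hbd : b ≠ 0 → d ≠ 0) :
    (a + b) * Real.log ((a + b) / (c + d)) ≤
      a * Real.log (a / c) + b * Real.log (b / d) := by
  rcases eq_or_ne a 0 with rfl | ha0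
  · simp only [zero_add, zero_mul]
    rcases eq_or_ne b 0 with rfl | hb0
    · simp
    · have hd0 : 0 < d := lt_of_le_of_ne hd (Ne.symm (hbd hb0))
      have hbpos : 0 < b := lt_of_le_of_ne hb (Ne.symm hb0)
      have h1 : b / (c + d) ≤ b / d :=
        div_le_div_of_nonneg_left hb hd0 (by linarith)
      have h2 : 0 < b / (c + d) := div_pos hbpos (by linarith)
      exact mul_le_mul_of_nonneg_left (Real.log_le_log h2 h1) hb
  rcases eq_or_ne b 0 with rfl | hb0
  · simp only [add_zero, zero_mul]
    have hc0 : 0 < c := lt_of_le_of_ne hc (Ne.symm (hac ha0))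
    have hapos : 0 < a := lt_of_le_of_ne ha (Ne.symm ha0)
    have h1 : a / (c + d) ≤ a / c :=
      div_le_div_of_nonneg_left ha hc0 (by linarith)
    have h2 : 0 < a / (c + d) := div_pos hapos (by linarith)
    exact mul_le_mul_of_nonneg_left (Real.log_le_log h2 h1) ha
  · have hc0 : 0 < c := lt_of_le_of_ne hc (Ne.symm (hac ha0))
    have hd0 : 0 < d := lt_of_le_of_ne hd (Ne.symm (hbd hb0))
    have hS : 0 < c + d := by linarith
    have key := Real.convexOn_mul_log.2 (Set.mem_Ici.mpr (div_nonneg ha hc))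
      (Set.mem_Ici.mpr (div_nonneg hb hd))
      (div_nonneg hc hS.le) (div_nonneg hd hS.le)
      (by field_simp)
    simp only [smul_eq_mul] at key
    have hpt : c / (c + d) * (a / c) + d / (c + d) * (b / d) = (a + b) / (c + d) := by
      field_simp
    rw [hpt] at key
    have key2 := mul_le_mul_of_nonneg_left key hS.le
    calc (a + b) * Real.log ((a + b) / (c + d))
        = (c + d) * ((a + b) / (c + d) * Real.log ((a + b) / (c + d))) := by
          field_simp
      _ ≤ (c + d) * (c / (c + d) * (a / c * Real.log (a / c)) +
            d / (c + d) * (b / d * Real.log (b / d))) := key2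
      _ = a * Real.log (a / c) + b * Real.log (b / d) := by field_simp

lemma relEnt_mix {Z : Type*} [Fintype Z] {μ : ℝ} (h0 : 0 < μ) (h1 : μ < 1)
    (p1 p2 q1 q2 : Z → ℝ) (hp1 : ∀ z, 0 ≤ p1 z) (hp2 : ∀ z, 0 ≤ p2 z)
    (hq1 : ∀ z, 0 ≤ q1 z) (hq2 : ∀ z, 0 ≤ q2 z) :
    relEnt (fun z => μ * p1 z + (1 - μ) * p2 z) (fun z => μ * q1 z + (1 - μ) * q2 z) ≤
      ENNReal.ofReal μ * relEnt p1 q1 + ENNReal.ofReal (1 - μ) * relEnt p2 q2 := by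
  have hμ' : (0:ℝ) < 1 - μ := by linarith
  have hc1 : ENNReal.ofReal μ ≠ 0 := (ENNReal.ofReal_pos.mpr h0).ne'
  have hc2 : ENNReal.ofReal (1 - μ) ≠ 0 := (ENNReal.ofReal_pos.mpr hμ').ne'
  by_cases hbad : ∃ z, (μ * p1 z + (1 - μ) * p2 z) ≠ 0 ∧ (μ * q1 z + (1 - μ) * q2 z) = 0
  · obtain ⟨z, hpz, hqz⟩ := hbad
    have hq1z : q1 z = 0 ∧ q2 z = 0 := by
      constructor <;> nlinarith [hq1 z, hq2 z, mul_nonneg h0.le (hq1 z), mul_nonneg hμ'.le (hq2 z)]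
    rcases (by by_contra h; push_neg at h; apply hpz; rw [h.1, h.2]; ring :
        p1 z ≠ 0 ∨ p2 z ≠ 0) with h | h
    · have : relEnt p1 q1 = ⊤ := if_pos ⟨z, h, hq1z.1⟩
      rw [this, ENNReal.mul_top hc1, top_add]
      exact le_top
    · have : relEnt p2 q2 = ⊤ := if_pos ⟨z, h, hq1z.2⟩
      rw [this, ENNReal.mul_top hc2, add_top]
      exact le_top
  · by_cases hb1 : ∃ z, p1 z ≠ 0 ∧ q1 z = 0
    · rw [show relEnt p1 q1 = ⊤ from if_pos hb1, ENNReal.mul_top hc1, top_add]; exact le_top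
    by_cases hb2 : ∃ z, p2 z ≠ 0 ∧ q2 z = 0
    · rw [show relEnt p2 q2 = ⊤ from if_pos hb2, ENNReal.mul_top hc2, add_top]; exact le_top
    push_neg at hb1 hb2
    rw [relEnt, relEnt, relEnt, if_neg hbad, if_neg (by push_neg; exact hb1),
      if_neg (by push_neg; exact hb2)]
    have key : ∑ z, (μ * p1 z + (1 - μ) * p2 z) *
          Real.log ((μ * p1 z + (1 - μ) * p2 z) / (μ * q1 z + (1 - μ) * q2 z)) ≤
        μ * (∑ z, p1 z * Real.log (p1 z / q1 z)) +
          (1 - μ) * (∑ z, p2 z * Real.log (p2 z / q2 z)) := by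
      rw [Finset.mul_sum, Finset.mul_sum, ← Finset.sum_add_distrib]
      apply Finset.sum_le_sum
      intro z _
      have h := logSum2 (μ * p1 z) ((1 - μ) * p2 z) (μ * q1 z) ((1 - μ) * q2 z)
        (mul_nonneg h0.le (hp1 z)) (mul_nonneg hμ'.le (hp2 z))
        (mul_nonneg h0.le (hq1 z)) (mul_nonneg hμ'.le (hq2 z))
        (fun ha => by
          have hp : p1 z ≠ 0 := fun h' => ha (by rw [h']; ring)
          exact mul_ne_zero h0.ne' (hb1 z hp))
        (fun hbz => by
          have hp : p2 z ≠ 0 := fun h' => hbz (by rw [h']; ring)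
          exact mul_ne_zero hμ'.ne' (hb2 z hp))
      rw [mul_div_mul_left _ _ h0.ne', mul_div_mul_left _ _ hμ'.ne'] at h
      calc (μ * p1 z + (1 - μ) * p2 z) *
            Real.log ((μ * p1 z + (1 - μ) * p2 z) / (μ * q1 z + (1 - μ) * q2 z))
          ≤ μ * p1 z * Real.log (p1 z / q1 z) + (1 - μ) * p2 z * Real.log (p2 z / q2 z) := h
        _ = μ * (p1 z * Real.log (p1 z / q1 z)) + (1 - μ) * (p2 z * Real.log (p2 z / q2 z)) := by
            ring
    calc ENNReal.ofReal (∑ z, (μ * p1 z + (1 - μ) * p2 z) *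
            Real.log ((μ * p1 z + (1 - μ) * p2 z) / (μ * q1 z + (1 - μ) * q2 z)))
        ≤ ENNReal.ofReal (μ * (∑ z, p1 z * Real.log (p1 z / q1 z)) +
            (1 - μ) * (∑ z, p2 z * Real.log (p2 z / q2 z))) := ENNReal.ofReal_le_ofReal key
      _ ≤ ENNReal.ofReal (μ * (∑ z, p1 z * Real.log (p1 z / q1 z))) +
            ENNReal.ofReal ((1 - μ) * (∑ z, p2 z * Real.log (p2 z / q2 z))) :=
          ENNReal.ofReal_add_le
      _ = _ := by rw [ENNReal.ofReal_mul h0.le, ENNReal.ofReal_mul hμ'.le]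

lemma mix_isBehavior {r s : ℕ} {Q1 Q2 : Fin r → Fin r → Fin s → Fin s → ℝ}
    (h1 : IsBehavior Q1) (h2 : IsBehavior Q2) {μ : ℝ} (h0 : 0 ≤ μ) (hμ1 : μ ≤ 1) :
    IsBehavior (fun a b x y => μ * Q1 a b x y + (1 - μ) * Q2 a b x y) := by
  constructor
  · intro a b x y
    have := h1.1 a b x y; have := h2.1 a b x y
    show 0 ≤ μ * Q1 a b x y + (1 - μ) * Q2 a b x y
    nlinarith
  · intro x y
    simp only [Finset.sum_add_distrib, ← Finset.mul_sum]
    rw [h1.2 x y, h2.2 x y]; ring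

lemma mix_isLocal {r s : ℕ} {Q1 Q2 : Fin r → Fin r → Fin s → Fin s → ℝ}
    (h1 : IsLocal Q1) (h2 : IsLocal Q2) {μ : ℝ} (h0 : 0 ≤ μ) (hμ1 : μ ≤ 1) :
    IsLocal (fun a b x y => μ * Q1 a b x y + (1 - μ) * Q2 a b x y) := by
  obtain ⟨n1, q1, PA1, PB1, hq1, hPA1, hPB1, hrep1⟩ := h1
  obtain ⟨n2, q2, PA2, PB2, hq2, hPA2, hPB2, hrep2⟩ := h2
  refine ⟨n1 + n2, Fin.addCases (fun i => μ * q1 i) (fun j => (1 - μ) * q2 j),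
    fun a x => Fin.addCases (fun i => PA1 a x i) (fun j => PA2 a x j),
    fun b y => Fin.addCases (fun i => PB1 b y i) (fun j => PB2 b y j), ?_, ?_, ?_, ?_⟩
  · constructor
    · intro l
      refine Fin.addCases (fun i => ?_) (fun j => ?_) l
      · simp only [Fin.addCases_left]; exact mul_nonneg h0 (hq1.1 i)
      · simp only [Fin.addCases_right]; exact mul_nonneg (by linarith) (hq2.1 j)
    · rw [Fin.sum_univ_add]
      simp only [Fin.addCases_left, Fin.addCases_right, ← Finset.mul_sum, hq1.2, hq2.2]
      ring
  · intro x l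
    constructor
    · intro a
      refine Fin.addCases (fun i => ?_) (fun j => ?_) l
      · simp only [Fin.addCases_left]; exact (hPA1 x i).1 a
      · simp only [Fin.addCases_right]; exact (hPA2 x j).1 a
    · refine Fin.addCases (fun i => ?_) (fun j => ?_) l
      · simp only [Fin.addCases_left]; exact (hPA1 x i).2
      · simp only [Fin.addCases_right]; exact (hPA2 x j).2
  · intro y l
    constructor
    · intro b
      refine Fin.addCases (fun i => ?_) (fun j => ?_) l
      · simp only [Fin.addCases_left]; exact (hPB1 y i).1 b
      · simp only [Fin.addCases_right]; exact (hPB2 y j).1 b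
    · refine Fin.addCases (fun i => ?_) (fun j => ?_) l
      · simp only [Fin.addCases_left]; exact (hPB1 y i).2
      · simp only [Fin.addCases_right]; exact (hPB2 y j).2
  · intro a b x y
    rw [Fin.sum_univ_add]
    simp only [Fin.addCases_left, Fin.addCases_right]
    rw [hrep1 a b x y, hrep2 a b x y, Finset.mul_sum, Finset.mul_sum]
    congr 1 <;> apply Finset.sum_congr rfl <;> intros <;> ring

lemma exists_local_behavior {r s : ℕ} (hr : 0 < r) :
    ∃ Q : Fin r → Fin r → Fin s → Fin s → ℝ, IsBehavior Q ∧ IsLocal Q := by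
  have hr' : (0:ℝ) < r := by exact_mod_cast hr
  refine ⟨fun a b x y => (r:ℝ)⁻¹ * (r:ℝ)⁻¹, ⟨?_, ?_⟩, ?_⟩
  · intro a b x y; positivity
  · intro x y
    simp [Finset.sum_const, Finset.card_univ]
    field_simp
  · refine ⟨1, fun _ => 1, fun a x l => (r:ℝ)⁻¹, fun b y l => (r:ℝ)⁻¹, ⟨fun _ => zero_le_one, by simp⟩,
      ?_, ?_, ?_⟩
    · intro x l
      refine ⟨fun a => by positivity, ?_⟩
      simp [Finset.sum_const, Finset.card_univ]
      field_simp
    · intro y l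
      refine ⟨fun b => by positivity, ?_⟩
      simp [Finset.sum_const, Finset.card_univ]
      field_simp
    · intro a b x y; simp

/-- convexity of the uncorrelated-input statistical strength. -/
theorem Suc_convex {r s : ℕ}
    (P P' : Fin r → Fin r → Fin s → Fin s → ℝ)
    (hP : IsBehavior P) (hP' : IsBehavior P')
    (μ : ℝ) (hμ0 : 0 ≤ μ) (hμ1 : μ ≤ 1) :
    Suc (fun a b x y => μ * P a b x y + (1 - μ) * P' a b x y) ≤
      ENNReal.ofReal μ * Suc P + ENNReal.ofReal (1 - μ) * Suc P' := by
  rcases eq_or_lt_of_le hμ0 with h0 | h0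
  · have hPeq : (fun a b x y => μ * P a b x y + (1 - μ) * P' a b x y) = P' := by
      funext a b x y; rw [← h0]; ring
    rw [hPeq, ← h0]
    simp
  rcases eq_or_lt_of_le hμ1 with h1 | h1
  · have hPeq : (fun a b x y => μ * P a b x y + (1 - μ) * P' a b x y) = P := by
      funext a b x y; rw [h1]; ring
    rw [hPeq, h1]
    simp
  -- degenerate scenarios
  rcases Nat.eq_zero_or_pos s with hs | hs
  · subst hs
    have hz : Suc (fun a b x y => μ * P a b x y + (1 - μ) * P' a b x y) = 0 := by
      simp [Suc, IsDist]
    rw [hz]; exact zero_le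
  rcases Nat.eq_zero_or_pos r with hr | hr
  · exfalso; subst hr
    have := hP.2 ⟨0, hs⟩ ⟨0, hs⟩
    simp at this
  set c1 := ENNReal.ofReal μ with hc1def
  set c2 := ENNReal.ofReal (1 - μ) with hc2def
  have hμ' : (0:ℝ) < 1 - μ := by linarith
  have hc1 : c1 ≠ 0 := (ENNReal.ofReal_pos.mpr h0).ne'
  have hc2 : c2 ≠ 0 := (ENNReal.ofReal_pos.mpr hμ').ne'
  have hc1t : c1 ≠ ⊤ := ENNReal.ofReal_ne_top
  have hc2t : c2 ≠ ⊤ := ENNReal.ofReal_ne_top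
  have hc1le : c1 ≤ 1 := by rw [hc1def, ← ENNReal.ofReal_one]; exact ENNReal.ofReal_le_ofReal hμ1
  have hc2le : c2 ≤ 1 := by rw [hc2def, ← ENNReal.ofReal_one]; exact ENNReal.ofReal_le_ofReal (by linarith)
  rw [Suc]
  apply iSup_le; intro DA
  apply iSup_le; intro DB
  apply iSup_le; intro hD
  set F : (Fin r → Fin r → Fin s → Fin s → ℝ) → (Fin r → Fin r → Fin s → Fin s → ℝ) → ℝ≥0∞ :=
    fun R Q => ∑ x, ∑ y, ENNReal.ofReal (DA x * DB y) *
      relEnt (outDist R x y) (outDist Q x y) with hFdef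
  set IP := ⨅ (Q : Fin r → Fin r → Fin s → Fin s → ℝ)
      (_ : IsBehavior Q ∧ IsLocal Q), F P Q with hIPdef
  set IP' := ⨅ (Q : Fin r → Fin r → Fin s → Fin s → ℝ)
      (_ : IsBehavior Q ∧ IsLocal Q), F P' Q with hIP'def
  have hIP_le : IP ≤ Suc P := by
    rw [Suc]; exact le_iSup_of_le DA (le_iSup_of_le DB (le_iSup_of_le hD le_rfl))
  have hIP'_le : IP' ≤ Suc P' := by
    rw [Suc]; exact le_iSup_of_le DA (le_iSup_of_le DB (le_iSup_of_le hD le_rfl))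
  have hmain : (⨅ (Q : Fin r → Fin r → Fin s → Fin s → ℝ)
      (_ : IsBehavior Q ∧ IsLocal Q),
        F (fun a b x y => μ * P a b x y + (1 - μ) * P' a b x y) Q) ≤ c1 * IP + c2 * IP' := by
    by_cases hIPt : IP = ⊤
    · rw [hIPt, ENNReal.mul_top hc1, top_add]; exact le_top
    by_cases hIP't : IP' = ⊤
    · rw [hIP't, ENNReal.mul_top hc2, add_top]; exact le_top
    apply ENNReal.le_of_forall_pos_le_add
    intro ε hε _
    set δ : ℝ≥0∞ := ((ε / 2 : NNReal) : ℝ≥0∞) with hδdef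
    have hδ0 : δ ≠ 0 := by
      rw [hδdef]; exact_mod_cast (half_pos hε).ne'
    have hIP1 : IP < IP + δ := ENNReal.lt_add_right hIPt hδ0
    obtain ⟨Q1, hIP1⟩ := iInf_lt_iff.mp hIP1
    obtain ⟨hQ1, hIP1⟩ := iInf_lt_iff.mp hIP1
    have hIP2 : IP' < IP' + δ := ENNReal.lt_add_right hIP't hδ0
    obtain ⟨Q2, hIP2⟩ := iInf_lt_iff.mp hIP2
    obtain ⟨hQ2, hIP2⟩ := iInf_lt_iff.mp hIP2
    set Qm : Fin r → Fin r → Fin s → Fin s → ℝ :=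
      fun a b x y => μ * Q1 a b x y + (1 - μ) * Q2 a b x y with hQmdef
    have hQm : IsBehavior Qm ∧ IsLocal Qm :=
      ⟨mix_isBehavior hQ1.1 hQ2.1 hμ0 hμ1, mix_isLocal hQ1.2 hQ2.2 hμ0 hμ1⟩
    have hpoint : ∀ x y,
        relEnt (outDist (fun a b x y => μ * P a b x y + (1 - μ) * P' a b x y) x y)
          (outDist Qm x y) ≤
        c1 * relEnt (outDist P x y) (outDist Q1 x y) +
          c2 * relEnt (outDist P' x y) (outDist Q2 x y) := by
      intro x y
      exact relEnt_mix h0 h1 (outDist P x y) (outDist P' x y)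
        (outDist Q1 x y) (outDist Q2 x y)
        (fun z => hP.1 z.1 z.2 x y) (fun z => hP'.1 z.1 z.2 x y)
        (fun z => hQ1.1.1 z.1 z.2 x y) (fun z => hQ2.1.1 z.1 z.2 x y)
    calc (⨅ (Q : Fin r → Fin r → Fin s → Fin s → ℝ)
          (_ : IsBehavior Q ∧ IsLocal Q),
            F (fun a b x y => μ * P a b x y + (1 - μ) * P' a b x y) Q)
        ≤ F (fun a b x y => μ * P a b x y + (1 - μ) * P' a b x y) Qm := iInf₂_le Qm hQm
      _ ≤ ∑ x, ∑ y, (c1 * (ENNReal.ofReal (DA x * DB y) *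
            relEnt (outDist P x y) (outDist Q1 x y)) +
            c2 * (ENNReal.ofReal (DA x * DB y) *
            relEnt (outDist P' x y) (outDist Q2 x y))) := by
          rw [hFdef]
          apply Finset.sum_le_sum; intro x _
          apply Finset.sum_le_sum; intro y _
          calc ENNReal.ofReal (DA x * DB y) *
                relEnt (outDist (fun a b x y => μ * P a b x y + (1 - μ) * P' a b x y) x y)
                  (outDist Qm x y)
              ≤ ENNReal.ofReal (DA x * DB y) *
                (c1 * relEnt (outDist P x y) (outDist Q1 x y) +
                  c2 * relEnt (outDist P' x y) (outDist Q2 x y)) :=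
                mul_le_mul_right (hpoint x y) _
            _ = c1 * (ENNReal.ofReal (DA x * DB y) *
                  relEnt (outDist P x y) (outDist Q1 x y)) +
                c2 * (ENNReal.ofReal (DA x * DB y) *
                  relEnt (outDist P' x y) (outDist Q2 x y)) := by ring
      _ = c1 * F P Q1 + c2 * F P' Q2 := by
          rw [hFdef]
          simp only [Finset.sum_add_distrib, ← Finset.mul_sum]
      _ ≤ c1 * (IP + δ) + c2 * (IP' + δ) :=
          add_le_add (mul_le_mul_right hIP1.le _) (mul_le_mul_right hIP2.le _)
      _ = (c1 * IP + c2 * IP') + (c1 * δ + c2 * δ) := by ring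
      _ ≤ (c1 * IP + c2 * IP') + (δ + δ) := by
          gcongr
          · calc c1 * δ ≤ 1 * δ := mul_le_mul_left hc1le δ
              _ = δ := one_mul δ
          · calc c2 * δ ≤ 1 * δ := mul_le_mul_left hc2le δ
              _ = δ := one_mul δ
      _ = (c1 * IP + c2 * IP') + ε := by
          congr 1
          rw [hδdef, ← ENNReal.coe_add, add_halves]
  calc (⨅ (Q : Fin r → Fin r → Fin s → Fin s → ℝ)
      (_ : IsBehavior Q ∧ IsLocal Q),
        F (fun a b x y => μ * P a b x y + (1 - μ) * P' a b x y) Q)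
      ≤ c1 * IP + c2 * IP' := hmain
    _ ≤ c1 * Suc P + c2 * Suc P' :=
        add_le_add (mul_le_mul_right hIP_le _) (mul_le_mul_right hIP'_le _)
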